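/- Let F : (ℂ^p,0) → (ℂ^m,0) be a formal mapping, X_1,…,X_k formal vector fields on ℂ^p, and Y_1,…,Y_k formal vector fields on ℂ^m. Suppose there are nonzero c_1,…,c_k ∈ ℂ[[x]] such that X_j(f∘F) = c_j·((Y_j f)∘F) for all f ∈ ℂ[[y]] and j = 1,…,k, and suppose that the vector space obtained by evaluating at 0 the elements of the Lie algebra generated by Y_1,…,Y_k has dimension m. Then Rk F = m. -/

import Mathlib

noncomputable section

namespace Segre

open MvPowerSeries

/-- Formal power series with complex coefficients. -/
abbrev PS (σ : Type*) := MvPowerSeries σ ℂ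

/-- Build a power series from its coefficient function. -/
def ofFun {σ : Type*} (g : (σ →₀ ℕ) → ℂ) : PS σ := g

/-- Coefficientwise complex conjugation of a formal power series. -/
def conjPS {σ : Type*} (f : PS σ) : PS σ := MvPowerSeries.map (σ := σ) (starRingEnd ℂ) f

/-- Formal partial derivative of a formal power series. -/
def pd {σ : Type*} [DecidableEq σ] (j : σ) (f : PS σ) : PS σ :=
  ofFun fun m => ((m j : ℂ) + 1) * MvPowerSeries.coeff (R := ℂ) (m + Finsupp.single j 1) f

/-- Reindexing of variables along an equivalence. -/
def reindexPS {σ τ : Type*} (e : σ ≃ τ) (f : PS σ) : PS τ :=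
  ofFun fun m => MvPowerSeries.coeff (R := ℂ) (Finsupp.equivMapDomain e.symm m) f

/-- Formal composition (substitution) `f ∘ F` of a formal power series
`f` in the variables `τ` with a family `F` of power series without constant
term.  (For families with nonvanishing constant term the value is junk.) -/
def cmp {τ σ : Type*} [Fintype τ] [DecidableEq τ] (f : PS τ) (F : τ → PS σ) : PS σ :=
  ofFun fun m => MvPowerSeries.coeff (R := ℂ) m
    (∑ α ∈ Finset.Iic (Finsupp.equivFunOnFinite.symm fun _ => m.sum fun _ k => k),
      MvPowerSeries.coeff (R := ℂ) α f • ∏ i, F i ^ α i)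

/-- Renaming of variables along an (injective) map. -/
def injPS {σ τ : Type*} [Fintype σ] [DecidableEq σ] (ι : σ → τ) (f : PS σ) : PS τ :=
  cmp f fun s => MvPowerSeries.X (ι s)

/-- The "generic rank" of a matrix over a commutative ring: the largest size of a
nonvanishing minor. -/
def matGenRank {α β R : Type*} [Fintype α] [Fintype β] [CommRing R] (M : Matrix α β R) : ℕ :=
  sSup {s | ∃ (r : Fin s ↪ α) (c : Fin s ↪ β), (M.submatrix r c).det ≠ 0}

/-- The Jacobian matrix of a formal mapping. -/
def jac {σ ι : Type*} [DecidableEq σ] (F : ι → PS σ) : Matrix ι σ (PS σ) :=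
  Matrix.of fun i j => pd j (F i)

/-- The rank `Rk F` of a formal mapping: the largest size of a nonvanishing minor of the
Jacobian matrix, i.e. the rank of the Jacobian matrix over the fraction field. -/
def rk {σ ι : Type*} [Fintype σ] [DecidableEq σ] [Fintype ι] (F : ι → PS σ) : ℕ :=
  matGenRank (jac F)

/-- The rank at `0` of the Jacobian matrix of a formal mapping. -/
def rk0 {σ ι : Type*} [Fintype σ] [DecidableEq σ] [Fintype ι] (F : ι → PS σ) : ℕ :=
  Matrix.rank ((jac F).map (MvPowerSeries.constantCoeff (σ := σ) (R := ℂ)))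

/-- A formal mapping: each component has vanishing constant term. -/
def IsFormalMap {σ ι : Type*} (F : ι → PS σ) : Prop :=
  ∀ i, MvPowerSeries.constantCoeff (σ := σ) (R := ℂ) (F i) = 0

/-- The differential at `0` of a formal power series. -/
def diff0 {σ : Type*} [DecidableEq σ] (f : PS σ) : σ → ℂ :=
  fun j => MvPowerSeries.constantCoeff (σ := σ) (R := ℂ) (pd j f)

/-- `I` is the manifold ideal with generators `f`: the generators have no constant
term, generate `I`, and have linearly independent differentials at `0`. -/
def IsMfldIdealWith {σ ι : Type*} [Fintype σ] [DecidableEq σ]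
    (I : Ideal (PS σ)) (f : ι → PS σ) : Prop :=
  (∀ i, MvPowerSeries.constantCoeff (σ := σ) (R := ℂ) (f i) = 0) ∧
  I = Ideal.span (Set.range f) ∧
  LinearIndependent ℂ fun i => diff0 (f i)

/-- `I` is a manifold ideal of codimension `d`. -/
def IsMfldIdeal {σ : Type*} [Fintype σ] [DecidableEq σ] (I : Ideal (PS σ)) (d : ℕ) : Prop :=
  ∃ f : Fin d → PS σ, IsMfldIdealWith I f

/-- A formal vector field, given by its coefficients. -/
abbrev VF (σ : Type*) := σ → PS σ

/-- The action of a formal vector field (as a derivation) on a power series. -/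
def vfApply {σ : Type*} [Fintype σ] [DecidableEq σ] (X : VF σ) (f : PS σ) : PS σ :=
  ∑ j, X j * pd j f

/-- The Lie bracket (commutator) of two formal vector fields. -/
def vfBracket {σ : Type*} [Fintype σ] [DecidableEq σ] (X Y : VF σ) : VF σ :=
  fun j => vfApply X (Y j) - vfApply Y (X j)

/-- Evaluation of a formal vector field at the origin. -/
def vfEval0 {σ : Type*} (X : VF σ) : σ → ℂ :=
  fun j => MvPowerSeries.constantCoeff (σ := σ) (R := ℂ) (X j)

/-- A formal vector field is tangent to (the formal manifold defined by) an ideal if it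
maps the ideal into itself. -/
def Tangent {σ : Type*} [Fintype σ] [DecidableEq σ] (X : VF σ) (I : Ideal (PS σ)) : Prop :=
  ∀ f ∈ I, vfApply X f ∈ I

/-- The Lie algebra (of formal vector fields) generated by a set `S`. -/
inductive lieGen {σ : Type*} [Fintype σ] [DecidableEq σ] (S : Set (VF σ)) : VF σ → Prop
  | base {X} : X ∈ S → lieGen S X
  | add {X Y} : lieGen S X → lieGen S Y → lieGen S (X + Y)
  | smul (c : ℂ) {X} : lieGen S X → lieGen S (fun j => (MvPowerSeries.C (σ := σ) (R := ℂ) c) * X j)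
  | bracket {X Y} : lieGen S X → lieGen S Y → lieGen S (vfBracket X Y)

/-- A set of formal vector fields which is a Lie algebra and a `ℂ[[x]]`-module. -/
structure IsLieMod {σ : Type*} [Fintype σ] [DecidableEq σ] (g : Set (VF σ)) : Prop where
  add_mem : ∀ {X Y : VF σ}, X ∈ g → Y ∈ g → X + Y ∈ g
  smul_mem : ∀ (a : PS σ) {X : VF σ}, X ∈ g → (fun j => a * X j) ∈ g
  bracket_mem : ∀ {X Y : VF σ}, X ∈ g → Y ∈ g → vfBracket X Y ∈ g

/-- The involution `σ(f)(Z,ζ) = conj f(ζ,Z)` on power series in `(Z,ζ)`. -/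
def realOp {σZ : Type*} (f : PS (σZ ⊕ σZ)) : PS (σZ ⊕ σZ) :=
  conjPS (reindexPS (Equiv.sumComm σZ σZ) f)

/-- The matrix `∂ρ/∂Z` of the derivatives of `ρ` in the first (holomorphic) block of
variables. -/
def zJac {σZ ι : Type*} [DecidableEq σZ] (ρ : ι → PS (σZ ⊕ σZ)) : Matrix ι σZ (PS (σZ ⊕ σZ)) :=
  Matrix.of fun l j => pd (Sum.inl j) (ρ l)

/-- `I` is the ideal of a formal generic manifold of codimension `d`, with given
generators `ρ`: `I` is a real manifold ideal and `∂ρ/∂Z(0)` has rank `d`. -/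
def IsGenericMfld {σZ : Type*} [Fintype σZ] [DecidableEq σZ] {d : ℕ}
    (I : Ideal (PS (σZ ⊕ σZ))) (ρ : Fin d → PS (σZ ⊕ σZ)) : Prop :=
  IsMfldIdealWith I ρ ∧ (∀ f ∈ I, realOp f ∈ I) ∧
  Matrix.rank ((zJac ρ).map (MvPowerSeries.constantCoeff (R := ℂ))) = d

/-- The set of formal `(1,0)` and `(0,1)` vector fields tangent to (the manifold defined
by) `I`. -/
def holFields {σZ : Type*} [Fintype σZ] [DecidableEq σZ] (I : Ideal (PS (σZ ⊕ σZ))) :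
    Set (VF (σZ ⊕ σZ)) :=
  {X | ((∀ j, X (Sum.inr j) = 0) ∨ (∀ j, X (Sum.inl j) = 0)) ∧ Tangent X I}

/-- `dim_ℂ g_M(0)`, where `g_M` is the Lie algebra generated by the formal `(1,0)` and
`(0,1)` vector fields tangent to `M`. -/
def gMDim {σZ : Type*} [Fintype σZ] [DecidableEq σZ] (I : Ideal (PS (σZ ⊕ σZ))) : ℕ :=
  Module.finrank ℂ (Submodule.span ℂ (vfEval0 '' {X | lieGen (holFields I) X}))

/-- `γ(ζ,t)` is a Segre variety mapping for the (formal generic manifold with) defining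
series `ρ`:  `γ` has no constant term, `ρ(γ(ζ,t),ζ) = 0`, and `∂γ/∂t(0)` has rank `n`. -/
def IsSegreMap {n d : ℕ} (ρ : Fin d → PS (Fin (n + d) ⊕ Fin (n + d)))
    (γ : Fin (n + d) → PS (Fin (n + d) ⊕ Fin n)) : Prop :=
  IsFormalMap γ ∧
  (∀ l, cmp (ρ l) (Sum.elim γ fun j => MvPowerSeries.X (Sum.inl j)) = 0) ∧
  Matrix.rank
    (Matrix.of fun (i : Fin (n + d)) (j : Fin n) =>
      MvPowerSeries.constantCoeff (R := ℂ) (pd (Sum.inr j) (γ i))) = n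

/-- The iterated Segre mappings: `iterSegre γ j` is `v^{j+1}`, a formal mapping from
`ℂ^{(j+1)n}` (with variables indexed by `Fin (j+1) × Fin n`) to `ℂ^N`. -/
def iterSegre {n d : ℕ} (γ : Fin (n + d) → PS (Fin (n + d) ⊕ Fin n)) :
    (j : ℕ) → Fin (n + d) → PS (Fin (j + 1) × Fin n)
  | 0 => fun c =>
      cmp (γ c) (Sum.elim (fun _ => 0) fun i => MvPowerSeries.X ((0 : Fin 1), i))
  | m + 1 => fun c =>
      cmp (γ c)
        (Sum.elim
          (fun z => conjPS (injPS (fun p : Fin (m + 1) × Fin n => (p.1.castSucc, p.2))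
            (iterSegre γ m z)))
          (fun i => MvPowerSeries.X (Fin.last (m + 1), i)))



/-! ### Auxiliary lemmas -/

section AuxPd

variable {σ : Type*} [DecidableEq σ]

lemma coeff_pd (j : σ) (f : PS σ) (m : σ →₀ ℕ) :
    coeff m (pd j f) = ((m j : ℂ) + 1) * coeff (m + Finsupp.single j 1) f := rfl

lemma pd_add (j : σ) (f g : PS σ) : pd j (f + g) = pd j f + pd j g := by
  ext m; simp [coeff_pd, map_add, mul_add]

lemma pd_comm (j l : σ) (f : PS σ) : pd j (pd l f) = pd l (pd j f) := by
  ext m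
  simp only [coeff_pd]
  rw [add_right_comm m (Finsupp.single j 1) (Finsupp.single l 1)]
  rcases eq_or_ne j l with rfl | h
  · ring
  · rw [Finsupp.add_apply, Finsupp.add_apply, Finsupp.single_apply, Finsupp.single_apply,
      if_neg h, if_neg (Ne.symm h)]
    push_cast
    ring

lemma pd_X (j i : σ) : pd j (MvPowerSeries.X i : PS σ) = if j = i then 1 else 0 := by
  rcases eq_or_ne j i with rfl | h
  · rw [if_pos rfl]
    ext m
    rw [coeff_pd, MvPowerSeries.coeff_X]
    rcases eq_or_ne m 0 with rfl | hm
    · simp [MvPowerSeries.coeff_one]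
    · rw [if_neg, MvPowerSeries.coeff_one, if_neg hm, mul_zero]
      intro hc
      exact hm (by simpa using add_right_cancel (hc.trans (zero_add _).symm))
  · rw [if_neg h]
    ext m
    rw [coeff_pd, MvPowerSeries.coeff_X]
    rw [if_neg, mul_zero, MvPowerSeries.coeff_zero]
    intro hc
    have := congrFun (congrArg (fun f : σ →₀ ℕ => (f : σ → ℕ)) hc) j
    simp [Finsupp.single_apply, if_neg (Ne.symm h), h] at this

lemma sum_swap_anti (n : σ →₀ ℕ) (F : (σ →₀ ℕ) → (σ →₀ ℕ) → ℂ) :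
    ∑ p ∈ Finset.HasAntidiagonal.antidiagonal n, F p.1 p.2 = ∑ p ∈ Finset.HasAntidiagonal.antidiagonal n, F p.2 p.1 := by
  conv_lhs => rw [← Finset.HasAntidiagonal.map_swap_antidiagonal]
  rw [Finset.sum_map]
  simp only [Function.Embedding.coeFn_mk, Prod.fst_swap, Prod.snd_swap]

lemma sum_shift (j : σ) (m : σ →₀ ℕ) (F : (σ →₀ ℕ) → (σ →₀ ℕ) → ℂ) :
    ∑ p ∈ (Finset.HasAntidiagonal.antidiagonal (m + Finsupp.single j 1) : Finset ((σ →₀ ℕ) × (σ →₀ ℕ))),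
        (p.1 j : ℂ) * F p.1 p.2
      = ∑ q ∈ (Finset.HasAntidiagonal.antidiagonal m : Finset ((σ →₀ ℕ) × (σ →₀ ℕ))),
          ((q.1 j : ℂ) + 1) * F (q.1 + Finsupp.single j 1) q.2 := by
  rw [← Finset.sum_filter_of_ne (p := fun p : (σ →₀ ℕ) × (σ →₀ ℕ) => p.1 j ≠ 0)
    (fun p _ h hp => h (by simp [hp]))]
  refine Finset.sum_nbij' (fun p => (p.1 - Finsupp.single j 1, p.2))
    (fun q => (q.1 + Finsupp.single j 1, q.2)) ?_ ?_ ?_ ?_ ?_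
  · rintro ⟨a, b⟩ hp
    simp only [Finset.mem_filter, Finset.HasAntidiagonal.mem_antidiagonal] at hp ⊢
    rw [Finsupp.sub_single_one_add hp.2, hp.1, add_tsub_cancel_right]
  · rintro ⟨a, b⟩ hq
    simp only [Finset.mem_filter, Finset.HasAntidiagonal.mem_antidiagonal] at hq ⊢
    constructor
    · rw [add_right_comm, hq]
    · simp
  · rintro ⟨a, b⟩ hp
    simp only [Finset.mem_filter, Finset.HasAntidiagonal.mem_antidiagonal] at hp
    have h1 : Finsupp.single j 1 ≤ a := Finsupp.single_le_iff.mpr (Nat.one_le_iff_ne_zero.mpr hp.2)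
    simp [tsub_add_cancel_of_le h1]
  · rintro ⟨a, b⟩ _
    simp
  · rintro ⟨a, b⟩ hp
    simp only [Finset.mem_filter, Finset.HasAntidiagonal.mem_antidiagonal] at hp
    have h1 : Finsupp.single j 1 ≤ a := Finsupp.single_le_iff.mpr (Nat.one_le_iff_ne_zero.mpr hp.2)
    have h2 : (a - Finsupp.single j 1 : σ →₀ ℕ) j = a j - 1 := by
      rw [Finsupp.tsub_apply, Finsupp.single_eq_same]
    simp only
    rw [tsub_add_cancel_of_le h1, h2, Nat.cast_sub (Nat.one_le_iff_ne_zero.mpr hp.2)]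
    ring

lemma pd_mul (j : σ) (f g : PS σ) : pd j (f * g) = pd j f * g + f * pd j g := by
  ext m
  rw [map_add, coeff_pd, MvPowerSeries.coeff_mul, MvPowerSeries.coeff_mul,
    MvPowerSeries.coeff_mul, Finset.mul_sum]
  simp only [coeff_pd]
  have split : ∀ p ∈ (Finset.HasAntidiagonal.antidiagonal (m + Finsupp.single j 1) :
      Finset ((σ →₀ ℕ) × (σ →₀ ℕ))),
      ((m j : ℂ) + 1) * (coeff p.1 f * coeff p.2 g)
        = (p.1 j : ℂ) * (coeff p.1 f * coeff p.2 g)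
          + (p.2 j : ℂ) * (coeff p.1 f * coeff p.2 g) := by
    intro p hp
    have h := DFunLike.congr_fun (Finset.HasAntidiagonal.mem_antidiagonal.mp hp) j
    simp only [Finsupp.add_apply, Finsupp.single_eq_same] at h
    rw [← add_mul]
    congr 1
    have h2 := congrArg (Nat.cast : ℕ → ℂ) h
    push_cast at h2
    linear_combination -h2
  rw [Finset.sum_congr rfl split, Finset.sum_add_distrib]
  congr 1
  · rw [sum_shift j m (fun a b => coeff a f * coeff b g)]
    exact Finset.sum_congr rfl fun q _ => by ring
  · rw [sum_swap_anti (m + Finsupp.single j 1) (fun a b => (b j : ℂ) * (coeff a f * coeff b g))]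
    rw [sum_shift j m (fun a b => coeff b f * coeff a g)]
    rw [sum_swap_anti m (fun a b => ((a j : ℂ) + 1) * (coeff b f * coeff (a + Finsupp.single j 1) g))]
    exact Finset.sum_congr rfl fun q _ => by ring

lemma pd_sum (j : σ) {ι : Type*} (s : Finset ι) (f : ι → PS σ) :
    pd j (∑ i ∈ s, f i) = ∑ i ∈ s, pd j (f i) :=
  map_sum (AddMonoidHom.mk' (pd j) (pd_add j)) f s

end AuxPd

section AuxVF

variable {σ : Type*} [Fintype σ] [DecidableEq σ]

lemma vfApply_mul (X : VF σ) (f g : PS σ) :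
    vfApply X (f * g) = vfApply X f * g + f * vfApply X g := by
  simp only [vfApply, pd_mul, mul_add, Finset.sum_add_distrib, Finset.sum_mul, Finset.mul_sum]
  congr 1
  · exact Finset.sum_congr rfl fun j _ => by ring
  · exact Finset.sum_congr rfl fun j _ => by ring

lemma vfApply_mulX (b : PS σ) (X : VF σ) (g : PS σ) :
    vfApply (fun l => b * X l) g = b * vfApply X g := by
  simp [vfApply, Finset.mul_sum, mul_assoc]

lemma vfApply_comb2 (b1 b2 : PS σ) (U1 U2 : VF σ) (g : PS σ) :
    vfApply (fun l => b1 * U1 l + b2 * U2 l) g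
      = b1 * vfApply U1 g + b2 * vfApply U2 g := by
  simp [vfApply, add_mul, Finset.sum_add_distrib, Finset.mul_sum, mul_assoc]

lemma vfApply_comb3 (b1 b2 b3 : PS σ) (U1 U2 U3 : VF σ) (g : PS σ) :
    vfApply (fun l => b1 * U1 l + (b2 * U2 l + b3 * U3 l)) g
      = b1 * vfApply U1 g + (b2 * vfApply U2 g + b3 * vfApply U3 g) := by
  simp [vfApply, add_mul, Finset.sum_add_distrib, Finset.mul_sum, mul_assoc]

lemma vfApply_pi_add (Z1 Z2 : VF σ) (f : PS σ) :
    vfApply (Z1 + Z2) f = vfApply Z1 f + vfApply Z2 f := by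
  simp [vfApply, add_mul, Finset.sum_add_distrib]

lemma vfApply_X (Z : VF σ) (i : σ) : vfApply Z (MvPowerSeries.X i) = Z i := by
  simp [vfApply, pd_X, mul_ite]

lemma vfApply_bracket (X Y : VF σ) (g : PS σ) :
    vfApply (vfBracket X Y) g = vfApply X (vfApply Y g) - vfApply Y (vfApply X g) := by
  have expand : ∀ U V : VF σ, vfApply U (vfApply V g)
      = (∑ l, ∑ j, U l * pd l (V j) * pd j g) + (∑ l, ∑ j, U l * V j * pd l (pd j g)) := by
    intro U V
    rw [← Finset.sum_add_distrib]
    refine Finset.sum_congr rfl fun l _ => ?_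
    rw [vfApply, pd_sum, Finset.mul_sum, ← Finset.sum_add_distrib]
    refine Finset.sum_congr rfl fun j _ => by rw [pd_mul]; ring
  have second : (∑ l, ∑ j, X l * Y j * pd l (pd j g)) = ∑ l, ∑ j, Y l * X j * pd l (pd j g) := by
    rw [Finset.sum_comm]
    exact Finset.sum_congr rfl fun l _ => Finset.sum_congr rfl fun j _ => by
      rw [pd_comm]; ring
  have e2 : ∀ U V : VF σ, vfApply (vfBracket U V) g
      = (∑ l, ∑ j, U l * pd l (V j) * pd j g) - (∑ l, ∑ j, V l * pd l (U j) * pd j g) := by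
    intro U V
    have h0 : vfApply (vfBracket U V) g = ∑ j, (vfApply U (V j) - vfApply V (U j)) * pd j g := rfl
    calc vfApply (vfBracket U V) g
        = ∑ j, ((∑ l, U l * pd l (V j) * pd j g) - (∑ l, V l * pd l (U j) * pd j g)) := by
          rw [h0]
          refine Finset.sum_congr rfl fun j _ => ?_
          rw [sub_mul, vfApply, vfApply, Finset.sum_mul, Finset.sum_mul]
      _ = (∑ j, ∑ l, U l * pd l (V j) * pd j g) - (∑ j, ∑ l, V l * pd l (U j) * pd j g) :=
          Finset.sum_sub_distrib _ _
      _ = (∑ l, ∑ j, U l * pd l (V j) * pd j g) - (∑ l, ∑ j, V l * pd l (U j) * pd j g) := by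
          congr 1 <;> exact Finset.sum_comm
  rw [expand X Y, expand Y X, second, e2]
  ring

end AuxVF

section AuxCmp

variable {σ τ : Type*} [Fintype τ] [DecidableEq τ]

lemma coeff_cmp (f : PS τ) (F : τ → PS σ) (m : σ →₀ ℕ) :
    coeff m (cmp f F)
      = ∑ α ∈ Finset.Iic (Finsupp.equivFunOnFinite.symm fun _ => m.sum fun _ k => k),
          MvPowerSeries.coeff α f * coeff m (∏ i, F i ^ α i) := by
  have h : coeff m (cmp f F) = MvPowerSeries.coeff m
    (∑ α ∈ Finset.Iic (Finsupp.equivFunOnFinite.symm fun _ => m.sum fun _ k => k),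
      MvPowerSeries.coeff α f • ∏ i, F i ^ α i) := rfl
  rw [h, map_sum]
  exact Finset.sum_congr rfl fun α _ => by rw [LinearMap.map_smul, smul_eq_mul]

lemma cmp_add (f g : PS τ) (F : τ → PS σ) : cmp (f + g) F = cmp f F + cmp g F := by
  ext m
  rw [map_add, coeff_cmp, coeff_cmp, coeff_cmp, ← Finset.sum_add_distrib]
  exact Finset.sum_congr rfl fun α _ => by rw [map_add, add_mul]

lemma cmp_smul (c : ℂ) (f : PS τ) (F : τ → PS σ) : cmp (c • f) F = c • cmp f F := by
  ext m
  rw [coeff_cmp]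
  have h : coeff m (c • cmp f F) = c * coeff m (cmp f F) := by
    rw [LinearMap.map_smul, smul_eq_mul]
  rw [h, coeff_cmp, Finset.mul_sum]
  refine Finset.sum_congr rfl fun α _ => ?_
  rw [LinearMap.map_smul, smul_eq_mul, mul_assoc]

lemma cmp_sub (f g : PS τ) (F : τ → PS σ) : cmp (f - g) F = cmp f F - cmp g F := by
  have h := cmp_add (f - g) g F
  rw [sub_add_cancel] at h
  rw [h]; ring

lemma sum_Iic_zero (t : (τ →₀ ℕ) → ℂ) :
    ∑ α ∈ Finset.Iic (0 : τ →₀ ℕ), t α = t 0 :=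
  Finset.sum_eq_single_of_mem 0 (Finset.mem_Iic.mpr le_rfl)
    (fun b hb hne => absurd (nonpos_iff_eq_zero.mp (Finset.mem_Iic.mp hb)) hne)

lemma prod_pow_zero (F : τ → PS σ) : (∏ i, F i ^ (0 : τ →₀ ℕ) i) = 1 := by
  simp

lemma bound_zero : (Finsupp.equivFunOnFinite.symm fun _ : τ => (0 : σ →₀ ℕ).sum fun _ k => k)
    = (0 : τ →₀ ℕ) := by
  ext s
  simp [Finsupp.equivFunOnFinite_symm_coe]

lemma constantCoeff_cmp (f : PS τ) {F : τ → PS σ} (hF : IsFormalMap F) :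
    constantCoeff (cmp f F) = constantCoeff f := by
  rw [← coeff_zero_eq_constantCoeff_apply, coeff_cmp, bound_zero, sum_Iic_zero, prod_pow_zero]
  rw [← coeff_zero_eq_constantCoeff_apply]
  simp

lemma cmp_X (i : τ) {F : τ → PS σ} (hF : IsFormalMap F) :
    cmp (MvPowerSeries.X i) F = F i := by
  ext m
  rw [coeff_cmp]
  rcases eq_or_ne m 0 with rfl | hm
  · rw [bound_zero, sum_Iic_zero, prod_pow_zero]
    rw [MvPowerSeries.coeff_X,
      if_neg (fun h => one_ne_zero (α := ℕ) (Finsupp.single_eq_zero.mp h.symm))]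
    rw [coeff_zero_eq_constantCoeff_apply, zero_mul]
    exact (hF i).symm
  · have hsum : 1 ≤ m.sum fun _ k => k := by
      rcases Finsupp.ne_iff.mp hm with ⟨a, ha⟩
      simp only [Finsupp.coe_zero, Pi.zero_apply] at ha
      calc 1 ≤ m a := Nat.one_le_iff_ne_zero.mpr ha
        _ ≤ m.sum fun _ k => k :=
          Finset.single_le_sum (f := fun i => m i) (fun _ _ => Nat.zero_le _)
            (Finsupp.mem_support_iff.mpr ha)
    have hmem : Finsupp.single i 1 ∈ Finset.Iic
        (Finsupp.equivFunOnFinite.symm fun _ : τ => m.sum fun _ k => k) := by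
      refine Finset.mem_Iic.mpr (Finsupp.single_le_iff.mpr ?_)
      simpa [Finsupp.equivFunOnFinite_symm_coe] using hsum
    rw [Finset.sum_eq_single_of_mem _ hmem (fun b _ hb => by
      rw [MvPowerSeries.coeff_X, if_neg hb, zero_mul])]
    rw [MvPowerSeries.coeff_X, if_pos rfl, one_mul]
    congr 1
    rw [Finset.prod_eq_single i (fun l _ hl => by
      rw [Finsupp.single_eq_of_ne hl, pow_zero]) (fun h => absurd (Finset.mem_univ i) h)]
    rw [Finsupp.single_eq_same, pow_one]

end AuxCmp

section AuxKey

lemma key {p m k : ℕ} (F : Fin m → PS (Fin p))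
    (X : Fin k → VF (Fin p)) (Y : Fin k → VF (Fin m)) (c : Fin k → PS (Fin p))
    (hc : ∀ j, c j ≠ 0)
    (hid : ∀ j f, vfApply (X j) (cmp f F) = c j * cmp (vfApply (Y j) f) F)
    {Z : VF (Fin m)} (hZ : lieGen (Set.range Y) Z) :
    ∃ (a : PS (Fin p)) (W : VF (Fin p)), a ≠ 0 ∧
      ∀ f, vfApply W (cmp f F) = a * cmp (vfApply Z f) F := by
  induction hZ with
  | base h =>
      obtain ⟨j, rfl⟩ := h
      exact ⟨c j, X j, hc j, fun f => hid j f⟩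
  | @add Z1 Z2 h1 h2 ih1 ih2 =>
      obtain ⟨a1, W1, ha1, hW1⟩ := ih1
      obtain ⟨a2, W2, ha2, hW2⟩ := ih2
      refine ⟨a1 * a2, fun l => a2 * W1 l + a1 * W2 l, mul_ne_zero ha1 ha2, fun f => ?_⟩
      rw [vfApply_comb2, hW1, hW2, vfApply_pi_add, cmp_add]
      ring
  | @smul c0 Z0 h ih =>
      obtain ⟨a, W, ha, hW⟩ := ih
      refine ⟨a, fun l => MvPowerSeries.C c0 * W l, ha, fun f => ?_⟩
      rw [vfApply_mulX, hW, vfApply_mulX, ← MvPowerSeries.smul_eq_C_mul,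
        ← MvPowerSeries.smul_eq_C_mul, cmp_smul, mul_smul_comm]
  | @bracket Z1 Z2 h1 h2 ih1 ih2 =>
      obtain ⟨a1, W1, ha1, hW1⟩ := ih1
      obtain ⟨a2, W2, ha2, hW2⟩ := ih2
      refine ⟨a1 * a1 * (a2 * a2),
        fun l => (a1 * a2) * vfBracket W1 W2 l
          + ((a2 * vfApply W2 a1) * W1 l + (-(a1 * vfApply W1 a2)) * W2 l),
        mul_ne_zero (mul_ne_zero ha1 ha1) (mul_ne_zero ha2 ha2), fun f => ?_⟩
      have e1 : vfApply W1 (vfApply W2 (cmp f F))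
          = vfApply W1 a2 * cmp (vfApply Z2 f) F
            + a2 * (a1 * cmp (vfApply Z1 (vfApply Z2 f)) F) := by
        rw [hW2, vfApply_mul, hW1]
      have e2 : vfApply W2 (vfApply W1 (cmp f F))
          = vfApply W2 a1 * cmp (vfApply Z1 f) F
            + a1 * (a2 * cmp (vfApply Z2 (vfApply Z1 f)) F) := by
        rw [hW1, vfApply_mul, hW2]
      have e3 : vfApply (vfBracket Z1 Z2) f
          = vfApply Z1 (vfApply Z2 f) - vfApply Z2 (vfApply Z1 f) := vfApply_bracket _ _ _
      rw [vfApply_comb3, vfApply_bracket, e1, e2, hW1, hW2, e3, cmp_sub]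
      ring

end AuxKey

section AuxLin

open Matrix

lemma exists_fin_subfamily {K V : Type*} [Field K] [AddCommGroup V] [Module K V]
    [FiniteDimensional K V] {S : Set V} (h : Submodule.span K S = ⊤) {n : ℕ}
    (hn : Module.finrank K V = n) : ∃ v : Fin n → V, (∀ i, v i ∈ S) ∧ LinearIndependent K v := by
  obtain ⟨b, hbS, hspan, hind⟩ := exists_linearIndependent K S
  rw [h] at hspan
  have : Fintype b := hind.setFinite.fintype
  have hcard : Fintype.card b = n := by
    have hb : Module.finrank K V = Fintype.card b :=
      Module.finrank_eq_card_basis (Module.Basis.mk hind (by rw [Subtype.range_coe, hspan]))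
    rw [← hn, hb]
  let e := (Fintype.equivFinOfCardEq hcard).symm
  exact ⟨fun i => (e i : V), fun i => hbS (e i).2, hind.comp e e.injective⟩

lemma det_ne_zero_of_cols {K : Type*} [Field K] {n : ℕ} (M : Matrix (Fin n) (Fin n) K)
    (h : LinearIndependent K (fun j => Mᵀ j)) : M.det ≠ 0 := by
  intro h0
  obtain ⟨v, hv, hMv⟩ := Matrix.exists_mulVec_eq_zero_iff.mpr h0
  apply hv
  have hsum : ∑ j, v j • Mᵀ j = (0 : Fin n → K) := by
    funext i
    have := congrFun hMv i
    simpa [Matrix.mulVec, dotProduct, Finset.sum_apply, Matrix.transpose_apply,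
      mul_comm] using this
  have hz := Fintype.linearIndependent_iff.mp h v hsum
  ext j
  exact hz j

end AuxLin

/-- If the `Y_j` satisfy `X_j(f∘F) = c_j (Y_j f)∘F` and the Lie algebra
generated by the `Y_j`, evaluated at `0`, spans `ℂ^m`, then `Rk F = m`. -/
theorem statement_18 {p m k : ℕ} (F : Fin m → PS (Fin p)) (hF0 : IsFormalMap F)
    (X : Fin k → VF (Fin p)) (Y : Fin k → VF (Fin m)) (c : Fin k → PS (Fin p))
    (hc : ∀ j, c j ≠ 0)
    (hid : ∀ j (f : PS (Fin m)), vfApply (X j) (cmp f F) = c j * cmp (vfApply (Y j) f) F)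
    (hdim : Module.finrank ℂ
        (Submodule.span ℂ (vfEval0 '' {Z | lieGen (Set.range Y) Z})) = m) :
    rk F = m := by
  classical
  haveI : IsDomain (PS (Fin p)) := NoZeroDivisors.to_isDomain _
  -- Step 1: a basis of `ℂ^m` made of evaluations of Lie-algebra elements
  have hspan : Submodule.span ℂ (vfEval0 '' {Z | lieGen (Set.range Y) Z}) = ⊤ := by
    apply Submodule.eq_top_of_finrank_eq
    rw [hdim, Module.finrank_pi, Fintype.card_fin]
  obtain ⟨v, hvS, hvind⟩ := exists_fin_subfamily hspan
    (by rw [Module.finrank_pi, Fintype.card_fin])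
  have hvS' : ∀ i, ∃ Z, lieGen (Set.range Y) Z ∧ vfEval0 Z = v i := by
    intro i
    obtain ⟨Z, hZ, hZv⟩ := hvS i
    exact ⟨Z, hZ, hZv⟩
  choose Zs hZgen hZv using hvS'
  -- Step 2: the intertwining vector fields
  have hkey : ∀ j, ∃ a W, a ≠ (0 : PS (Fin p)) ∧
      ∀ f, vfApply W (cmp f F) = a * cmp (vfApply (Zs j) f) F :=
    fun j => key F X Y c hc hid (hZgen j)
  choose a W ha hW using hkey
  set Mt : Matrix (Fin m) (Fin m) (PS (Fin p)) := Matrix.of fun i j => cmp (Zs j i) F with hMt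
  set Wmat : Matrix (Fin p) (Fin m) (PS (Fin p)) := Matrix.of fun l j => W j l with hWmat
  have hprod : jac F * Wmat = Mt * Matrix.diagonal a := by
    refine Matrix.ext fun i j => ?_
    rw [Matrix.mul_apply, Matrix.mul_diagonal]
    have h1 := hW j (MvPowerSeries.X i)
    rw [cmp_X i hF0, vfApply_X] at h1
    calc ∑ l, jac F i l * Wmat l j = ∑ l, W j l * pd l (F i) :=
          Finset.sum_congr rfl fun l _ => mul_comm _ _
      _ = a j * cmp (Zs j i) F := h1
      _ = Mt i j * a j := mul_comm _ _
  -- Step 3: `det Mt ≠ 0` since its constant term is invertible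
  have hdetM : Mt.det ≠ 0 := by
    have hcols : (fun j => (Mt.map (constantCoeff)).transpose j) = v := by
      funext j
      funext i
      have h2 : constantCoeff (cmp (Zs j i) F) = constantCoeff (Zs j i) :=
        constantCoeff_cmp _ hF0
      have h3 : constantCoeff (Zs j i) = v j i := congrFun (hZv j) i
      simp only [Matrix.transpose_apply, Matrix.map_apply, hMt, Matrix.of_apply]
      rw [h2, h3]
    have h1 : (Mt.map (constantCoeff)).det ≠ 0 :=
      det_ne_zero_of_cols _ (by rw [hcols]; exact hvind)
    intro h0
    exact h1 (by rw [← RingHom.mapMatrix_apply, ← RingHom.map_det, h0, map_zero])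
  have hdet2 : (jac F * Wmat).det ≠ 0 := by
    rw [hprod, Matrix.det_mul, Matrix.det_diagonal]
    exact mul_ne_zero hdetM (Finset.prod_ne_zero_iff.mpr fun j _ => ha j)
  -- Step 4: pass to the fraction field
  let K := FractionRing (PS (Fin p))
  let φ : PS (Fin p) →+* K := algebraMap _ _
  have hφ : Function.Injective φ := IsFractionRing.injective _ _
  have hAB : (((jac F).map φ) * (Wmat.map φ)).det ≠ 0 := by
    rw [← Matrix.map_mul, ← RingHom.mapMatrix_apply, ← RingHom.map_det]
    intro h0
    exact hdet2 (hφ (by rw [h0, map_zero]))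
  have hsurj : Function.Surjective (Matrix.mulVecLin ((jac F).map φ)) := by
    have hinv := Matrix.mul_nonsing_inv (((jac F).map φ) * (Wmat.map φ))
      (isUnit_iff_ne_zero.mpr hAB)
    have hs : Function.Surjective (Matrix.mulVecLin (((jac F).map φ) * (Wmat.map φ))) := by
      intro w
      refine ⟨(((jac F).map φ) * (Wmat.map φ))⁻¹.mulVec w, ?_⟩
      rw [Matrix.mulVecLin_apply, Matrix.mulVec_mulVec, hinv, Matrix.one_mulVec]
    rw [Matrix.mulVecLin_mul] at hs
    exact Function.Surjective.of_comp hs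
  have hspanA : Submodule.span K (Set.range ((jac F).map φ).transpose) = ⊤ := by
    rw [show Set.range ((jac F).map φ).transpose = Set.range ((jac F).map φ).col from rfl,
      ← Matrix.range_mulVecLin, LinearMap.range_eq_top]
    exact hsurj
  obtain ⟨u, huS, huind⟩ := exists_fin_subfamily hspanA
    (by rw [Module.finrank_pi, Fintype.card_fin])
  have huS' : ∀ i, ∃ l, ((jac F).map φ).transpose l = u i := huS
  choose cidx hcidx using huS'
  have hcinj : Function.Injective cidx := by
    intro i j hij
    exact huind.injective (by rw [← hcidx i, ← hcidx j, hij])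
  -- Step 5: the nonvanishing minor
  have hsubdet : (((jac F).submatrix id cidx).det) ≠ 0 := by
    have hc2 : (fun j => (((jac F).map φ).submatrix id cidx).transpose j) = u := by
      funext j
      funext i
      rw [← hcidx j]
      rfl
    have h3 : (((jac F).map φ).submatrix id cidx).det ≠ 0 :=
      det_ne_zero_of_cols _ (by rw [hc2]; exact huind)
    intro h0
    apply h3
    rw [Matrix.submatrix_map, ← RingHom.mapMatrix_apply, ← RingHom.map_det, h0, map_zero]
  -- Step 6: conclude
  have hmem : m ∈ {s | ∃ (r : Fin s ↪ Fin m) (cc : Fin s ↪ Fin p),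
      ((jac F).submatrix r cc).det ≠ 0} :=
    ⟨Function.Embedding.refl _, ⟨cidx, hcinj⟩, hsubdet⟩
  have hub : ∀ s ∈ {s | ∃ (r : Fin s ↪ Fin m) (cc : Fin s ↪ Fin p),
      ((jac F).submatrix r cc).det ≠ 0}, s ≤ m := by
    rintro s ⟨r, -, -⟩
    simpa using Fintype.card_le_of_embedding r
  have hfin : matGenRank (jac F) = m :=
    le_antisymm (csSup_le ⟨m, hmem⟩ hub) (le_csSup ⟨m, hub⟩ hmem)
  exact hfin

end Segre
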